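/- Let Γ = (V, E, s, r) be a finite directed graph with a specialization γ, and let W_i and W_j be minimal hereditary subsets of V. If there exist vertices v ∈ W_i and w ∈ W_j that are connected in the undirected graph (V, γ̃(V)), then W_i = W_j. -/

import Mathlib

/-- `w` is a descendant of `v`: there is a (possibly empty) path from `v` to `w`. -/
def Descendant {V E : Type*} (s r : E → V) : V → V → Prop :=
  Relation.ReflTransGen fun a b => ∃ e, s e = a ∧ r e = b

/-- A nonempty subset `W ⊆ V` is hereditary if all descendants of its vertices lie in `W`. -/
def Hereditary {V E : Type*} (s r : E → V) (W : Set V) : Prop :=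
  W.Nonempty ∧ ∀ v ∈ W, ∀ w, Descendant s r v w → w ∈ W

/-- A minimal hereditary subset: hereditary and minimal under inclusion among
hereditary subsets. -/
def MinHereditary {V E : Type*} (s r : E → V) (W : Set V) : Prop :=
  Hereditary s r W ∧ ∀ U : Set V, Hereditary s r U → U ⊆ W → U = W

/-- Let `(V, E, s, r)` be a finite directed graph with a specialization `γ`
(special edges being those in the image of `γ`), and let `Wᵢ, Wⱼ` be minimal hereditary
subsets of `V`. If some `v ∈ Wᵢ` and `w ∈ Wⱼ` are connected in the undirected graph
`(V, γ̃(V))` (whose edges are the special edges with directions forgotten), then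
`Wᵢ = Wⱼ`. -/
theorem minHereditary_eq_of_connected
    {V E : Type*} [Fintype V] [Fintype E]
    (s r : E → V)
    (γ : {v : V // ∃ e, s e = v} → E)
    (hγ : ∀ v, s (γ v) = v.1)
    (Wi Wj : Set V) (hWi : MinHereditary s r Wi) (hWj : MinHereditary s r Wj)
    (v w : V) (hv : v ∈ Wi) (hw : w ∈ Wj)
    (hconn : Relation.ReflTransGen
      (fun a b => ∃ e, (∃ u, γ u = e) ∧ ((s e = a ∧ r e = b) ∨ (s e = b ∧ r e = a)))
      v w) :
    Wi = Wj := by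
  -- The special step relation.
  set S : V → V → Prop := fun a b => ∃ e, (∃ u, γ u = e) ∧ s e = a ∧ r e = b with hS
  -- S is right-unique: each vertex has at most one outgoing special edge.
  have hRU : Relator.RightUnique S := by
    rintro a b c ⟨e, ⟨u, rfl⟩, hse, hre⟩ ⟨e', ⟨u', rfl⟩, hse', hre'⟩
    have : u = u' := Subtype.ext (by rw [hγ u] at hse; rw [hγ u'] at hse'; rw [hse, hse'])
    subst this
    rw [← hre, ← hre']
  -- Special descendants are descendants.
  have hmono : ∀ {a b}, Relation.ReflTransGen S a b → Descendant s r a b := by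
    intro a b h
    exact Relation.ReflTransGen.mono (p := fun a b => ∃ e, s e = a ∧ r e = b) (fun x y ⟨e, _, h1, h2⟩ => ⟨e, h1, h2⟩) a b h
  -- Connectivity implies a common special descendant.
  have key : ∃ z, Relation.ReflTransGen S v z ∧ Relation.ReflTransGen S w z := by
    clear hv hw
    induction hconn with
    | refl => exact ⟨v, .refl, .refl⟩
    | tail _ hbc ih =>
      obtain ⟨z, hvz, hbz⟩ := ih
      obtain ⟨e, he, hd⟩ := hbc
      rcases hd with ⟨h1, h2⟩ | ⟨h1, h2⟩
      · -- edge b → c : c is a special descendant of b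
        rcases Relation.ReflTransGen.total_of_right_unique hRU
            (Relation.ReflTransGen.single (⟨e, he, h1, h2⟩ : S _ _)) hbz with h | h
        · exact ⟨z, hvz, h⟩
        · exact ⟨_, hvz.trans h, .refl⟩
      · -- edge c → b
        exact ⟨z, hvz, Relation.ReflTransGen.head ⟨e, he, h1, h2⟩ hbz⟩
  obtain ⟨z, hvz, hwz⟩ := key
  have hzWi : z ∈ Wi := hWi.1.2 v hv z (hmono hvz)
  have hzWj : z ∈ Wj := hWj.1.2 w hw z (hmono hwz)
  -- The descendant set of z is hereditary and contained in both.
  have hD : Hereditary s r {u | Descendant s r z u} :=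
    ⟨⟨z, Relation.ReflTransGen.refl⟩, fun a ha b hb => Relation.ReflTransGen.trans ha hb⟩
  have hi : ({u | Descendant s r z u} : Set V) = Wi :=
    hWi.2 _ hD (fun u hu => hWi.1.2 z hzWi u hu)
  have hj : ({u | Descendant s r z u} : Set V) = Wj :=
    hWj.2 _ hD (fun u hu => hWj.1.2 z hzWj u hu)
  rw [← hi, hj]
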